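/- Let d ≥ 1, let M, Q be real d×d matrices, let v, w be symmetric real d×d matrices, and let ψ′₀ be a symmetric solution of the algebraic Riccati equation ψ′₀M + Mᵀψ′₀ − 2ψ′₀QᵀQψ′₀ + v = 0 such that every eigenvalue of the complexification of M′ := M − 2QᵀQψ′₀ has negative real part. Assume w − ψ′₀ is invertible and that for every t ≥ 0 the matrix (w − ψ′₀)⁻¹ + 2∫₀ᵗ exp(M′s)·QᵀQ·exp((M′)ᵀs) ds is invertible, and that the limiting matrix (w − ψ′₀)⁻¹ + 2∫₀^∞ exp(M′s)·QᵀQ·exp((M′)ᵀs) ds (the improper integral converges under the eigenvalue assumption) is invertible. Then the variation-of-constants solution ψ(t) := ψ′₀ + exp((M′)ᵀt)·[(w − ψ′₀)⁻¹ + 2∫₀ᵗ exp(M′s)·QᵀQ·exp((M′)ᵀs) ds]⁻¹·exp(M′t) converges to ψ′₀ as t → ∞. -/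

import Mathlib

open Matrix NormedSpace

attribute [local instance] Matrix.linftyOpNormedRing Matrix.linftyOpNormedAlgebra

open scoped Nat ENNReal NNReal

lemma aux_exp_mulVec {d : ℕ} (A : Matrix (Fin d) (Fin d) ℂ) (x : Fin d → ℂ) (μ : ℂ)
    (hx : A *ᵥ x = μ • x) : exp A *ᵥ x = Complex.exp μ • x := by
  have hpow : ∀ n : ℕ, A ^ n *ᵥ x = μ ^ n • x := by
    intro n
    induction n with
    | zero => simp
    | succ n ih =>
      rw [pow_succ, ← Matrix.mulVec_mulVec, hx, Matrix.mulVec_smul, ih, smul_smul,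
        pow_succ]
      ring_nf
  let L : Matrix (Fin d) (Fin d) ℂ →ₗ[ℂ] (Fin d → ℂ) :=
    { toFun := fun B => B *ᵥ x
      map_add' := fun B C => Matrix.add_mulVec B C x
      map_smul' := fun c B => Matrix.smul_mulVec c B x }
  have h1 : HasSum (fun n : ℕ => L ((n !⁻¹ : ℂ) • A ^ n)) (L (exp A)) :=
    (exp_series_hasSum_exp' A).mapL L.toContinuousLinearMap
  have h2 : HasSum (fun n : ℕ => L ((n !⁻¹ : ℂ) • A ^ n)) (Complex.exp μ • x) := by
    have := (exp_series_hasSum_exp' (𝕂 := ℂ) μ).smul_const x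
    rw [Complex.exp_eq_exp_ℂ]
    convert this using 2 with n
    show ((n !⁻¹ : ℂ) • A ^ n) *ᵥ x = ((n !⁻¹ : ℂ) • μ ^ n) • x
    rw [Matrix.smul_mulVec, hpow n, smul_smul, smul_eq_mul]
  exact h1.unique h2

lemma aux_spec_exp {d : ℕ} (A : Matrix (Fin d) (Fin d) ℂ) (lam : ℂ)
    (h : lam ∈ spectrum ℂ (exp A)) : ∃ μ ∈ spectrum ℂ A, Complex.exp μ = lam := by
  set e := Matrix.toLinAlgEquiv' (R := ℂ) (n := Fin d) with he
  set g : Module.End ℂ (Fin d → ℂ) := e (exp A) with hg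
  set f : Module.End ℂ (Fin d → ℂ) := e A with hf
  have hE : lam ∈ spectrum ℂ g := by rw [hg, AlgEquiv.spectrum_eq]; exact h
  have hEig : g.HasEigenvalue lam := Module.End.hasEigenvalue_iff_mem_spectrum.mpr hE
  have hcomm : g * f = f * g := by
    rw [hg, hf, ← _root_.map_mul, ← _root_.map_mul]
    congr 1
    exact ((Commute.refl A).exp_right).symm
  set K := g.eigenspace lam with hK
  have hinv : ∀ x ∈ K, f x ∈ K := by
    intro x hx
    rw [hK, Module.End.mem_eigenspace_iff] at hx ⊢
    calc g (f x) = (g * f) x := rfl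
    _ = f (g x) := by rw [hcomm]; rfl
    _ = lam • f x := by rw [hx, _root_.map_smul]
  haveI : Nontrivial K := Submodule.nontrivial_iff_ne_bot.mpr hEig
  obtain ⟨μ, hμ⟩ := Module.End.exists_eigenvalue (f.restrict hinv)
  obtain ⟨v, hv⟩ := hμ.exists_hasEigenvector
  have hvK : (v : Fin d → ℂ) ∈ K := v.2
  have hv0 : (v : Fin d → ℂ) ≠ 0 := fun hc => hv.2 (Subtype.ext hc)
  have hfv : f (v : Fin d → ℂ) = μ • (v : Fin d → ℂ) := by
    have := congrArg Subtype.val hv.apply_eq_smul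
    simpa [LinearMap.restrict_coe_apply] using this
  have hAv : A *ᵥ (v : Fin d → ℂ) = μ • (v : Fin d → ℂ) := by
    rw [← hfv, hf]; rfl
  have hEv : exp A *ᵥ (v : Fin d → ℂ) = lam • (v : Fin d → ℂ) := by
    have := Module.End.mem_eigenspace_iff.mp hvK
    rw [← this, hg]; rfl
  have hμspec : μ ∈ spectrum ℂ A := by
    rw [← AlgEquiv.spectrum_eq e A, ← hf]
    exact (Module.End.hasEigenvalue_of_hasEigenvector
      ⟨Module.End.mem_eigenspace_iff.mpr hfv, hv0⟩).mem_spectrum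
  refine ⟨μ, hμspec, ?_⟩
  have h1 := (aux_exp_mulVec A _ μ hAv).symm.trans hEv
  have h2 : (Complex.exp μ - lam) • (v : Fin d → ℂ) = 0 := by
    rw [sub_smul, h1, sub_self]
  exact sub_eq_zero.mp ((smul_eq_zero.mp h2).resolve_right hv0)

lemma aux_norm_map {d : ℕ} (B : Matrix (Fin d) (Fin d) ℝ) :
    ‖B.map ((↑) : ℝ → ℂ)‖ = ‖B‖ := by
  rw [← coe_nnnorm, ← coe_nnnorm]
  congr 1
  rw [Matrix.linfty_opNNNorm_def, Matrix.linfty_opNNNorm_def]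
  simp [Matrix.map_apply]

lemma aux_decay {d : ℕ} (hd : 1 ≤ d) (A : Matrix (Fin d) (Fin d) ℝ)
    (hspec : ∀ lam ∈ spectrum ℂ (A.map ((↑) : ℝ → ℂ)), lam.re < 0) :
    ∃ C ε : ℝ, 0 < ε ∧ ∀ t : ℝ, 0 ≤ t → ‖exp (t • A)‖ ≤ C * Real.exp (-ε * t) := by
  haveI : NeZero d := ⟨by omega⟩
  set Ac := A.map ((↑) : ℝ → ℂ) with hAc
  -- transfer norms
  have hmap : ∀ t : ℝ, (exp (t • A)).map ((↑) : ℝ → ℂ) = exp (t • Ac) := by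
    intro t
    have hcont : Continuous ((algebraMap ℝ ℂ).mapMatrix :
        Matrix (Fin d) (Fin d) ℝ →+* Matrix (Fin d) (Fin d) ℂ) :=
      continuous_id.matrix_map Complex.continuous_ofReal
    have h1 := map_exp ((algebraMap ℝ ℂ).mapMatrix (m := Fin d)) hcont (t • A)
    have h2 : ((algebraMap ℝ ℂ).mapMatrix (t • A) : Matrix (Fin d) (Fin d) ℂ) = t • Ac := by
      ext i j
      simp only [RingHom.mapMatrix_apply, Matrix.map_apply, Matrix.smul_apply, hAc,
        smul_eq_mul, Complex.ofReal_mul, Complex.real_smul]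
      exact Complex.ofReal_mul _ _
    rw [h2] at h1
    rw [RingHom.mapMatrix_apply] at h1
    rw [show ⇑(algebraMap ℝ ℂ) = ((↑) : ℝ → ℂ) from rfl] at h1
    exact h1
  have hnorm : ∀ t : ℝ, ‖exp (t • A)‖ = ‖exp (t • Ac)‖ := by
    intro t
    rw [← hmap t, aux_norm_map]
  set B := exp Ac with hB
  -- spectral radius
  have hsr : spectralRadius ℂ B < 1 := by
    have := spectrum.spectralRadius_lt_of_forall_lt (a := B) (r := 1) ?_
    · simpa using this
    · intro z hz
      obtain ⟨μ, hμ, rfl⟩ := aux_spec_exp Ac z hz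
      have : ‖Complex.exp μ‖ < 1 := by
        rw [Complex.norm_exp]
        exact Real.exp_lt_one_iff.mpr (hspec μ hμ)
      exact this
  obtain ⟨r, hr1, hr2⟩ := ENNReal.lt_iff_exists_nnreal_btwn.mp hsr
  have hrpos : (0 : ℝ) < r := by
    have : (0 : ℝ≥0∞) < r := lt_of_le_of_lt zero_le hr1
    exact_mod_cast this
  have hrlt1 : (r : ℝ) < 1 := by exact_mod_cast hr2
  -- Gelfand: eventually ‖B^n‖ ≤ r^n
  have hev : ∀ᶠ n : ℕ in Filter.atTop, (‖B ^ n‖₊ : ℝ≥0∞) ^ (1 / (n : ℝ)) < r :=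
    (spectrum.pow_nnnorm_pow_one_div_tendsto_nhds_spectralRadius B).eventually_lt_const hr1
  obtain ⟨N, hN⟩ := Filter.eventually_atTop.mp (hev.and (Filter.eventually_ge_atTop 1))
  have hpowN : ∀ n ≥ N, ‖B ^ n‖ ≤ (r : ℝ) ^ n := by
    intro n hn
    obtain ⟨h1, h2⟩ := hN n hn
    have hne : (n : ℝ) ≠ 0 := Nat.cast_ne_zero.mpr (by omega)
    have h3 : ((‖B ^ n‖₊ : ℝ≥0∞) ^ (1 / (n : ℝ))) ^ (n : ℝ) < (r : ℝ≥0∞) ^ (n : ℝ) :=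
      ENNReal.rpow_lt_rpow h1 (by positivity)
    rw [← ENNReal.rpow_mul, one_div_mul_cancel hne, ENNReal.rpow_one] at h3
    have h4 : (‖B ^ n‖₊ : ℝ≥0∞) < ((r ^ n : ℝ≥0) : ℝ≥0∞) := by
      rwa [ENNReal.coe_pow, ← ENNReal.rpow_natCast (r : ℝ≥0∞) n]
    have h5 : ‖B ^ n‖₊ < r ^ n := by exact_mod_cast h4
    have := (coe_nnnorm (B ^ n)) ▸ (NNReal.coe_lt_coe.mpr h5).le
    simpa using this
  -- uniform power bound
  set C₀ : ℝ := max 1 ((Finset.range (N + 1)).sup' (by simp) fun n => ‖B ^ n‖ / (r : ℝ) ^ n)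
    with hC₀
  have hC₀1 : (1 : ℝ) ≤ C₀ := le_max_left _ _
  have hpow : ∀ n : ℕ, ‖B ^ n‖ ≤ C₀ * (r : ℝ) ^ n := by
    intro n
    rcases le_or_gt N n with h | h
    · calc ‖B ^ n‖ ≤ (r : ℝ) ^ n := hpowN n h
        _ ≤ C₀ * (r : ℝ) ^ n := by nlinarith [pow_pos hrpos n]
    · have hmem : n ∈ Finset.range (N + 1) := Finset.mem_range.mpr (by omega)
      have h1 : ‖B ^ n‖ / (r : ℝ) ^ n ≤ C₀ :=
        le_trans (Finset.le_sup' (f := fun n => ‖B ^ n‖ / (r : ℝ) ^ n) hmem) (le_max_right _ _)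
      have h2 := pow_pos hrpos n
      calc ‖B ^ n‖ = (‖B ^ n‖ / (r : ℝ) ^ n) * (r : ℝ) ^ n := by field_simp
        _ ≤ C₀ * (r : ℝ) ^ n := by nlinarith
  -- bound on [0,1]
  have hcont1 : ContinuousOn (fun s : ℝ => ‖exp (s • Ac)‖) (Set.Icc (0:ℝ) 1) :=
    ((exp_continuous.comp (continuous_id.smul continuous_const)).norm).continuousOn
  obtain ⟨x₁, hx₁, hK₁'⟩ := isCompact_Icc.exists_isMaxOn (⟨0, by norm_num⟩ :
    (Set.Icc (0:ℝ) 1).Nonempty) hcont1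
  have hK₁ : ∀ s ∈ Set.Icc (0:ℝ) 1, ‖exp (s • Ac)‖ ≤ ‖exp (x₁ • Ac)‖ := fun s hs => hK₁' hs
  set K₁ := ‖exp (x₁ • Ac)‖ with hK₁def
  have hK₁0 : 0 ≤ K₁ := norm_nonneg _
  set ε : ℝ := -Real.log r with hε
  have hεpos : 0 < ε := by
    rw [hε, neg_pos]
    exact Real.log_neg hrpos hrlt1
  have hrexp : ∀ n : ℕ, (r : ℝ) ^ n = Real.exp (-(ε * n)) := by
    intro n
    have h := Real.exp_nat_mul (Real.log r) n
    rw [Real.exp_log hrpos] at h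
    rw [← h, hε]
    ring_nf
  refine ⟨C₀ * K₁ * Real.exp ε, ε, hεpos, ?_⟩
  intro t ht
  set n := ⌊t⌋₊ with hn
  have hts : t = (n : ℝ) + (t - n) := by ring
  have hsplit : exp (t • Ac) = B ^ n * exp ((t - n) • Ac) := by
    have hcomm : Commute ((n : ℝ) • Ac) ((t - n) • Ac) :=
      ((Commute.refl Ac).smul_left _).smul_right _
    calc exp (t • Ac) = exp ((n : ℝ) • Ac + (t - n) • Ac) := by
          rw [← add_smul]; norm_num
      _ = exp ((n : ℝ) • Ac) * exp ((t - n) • Ac) := exp_add_of_commute hcomm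
      _ = B ^ n * exp ((t - n) • Ac) := by
          rw [Nat.cast_smul_eq_nsmul ℝ n Ac, Matrix.exp_nsmul]
  have hs01 : t - n ∈ Set.Icc (0:ℝ) 1 := by
    constructor
    · have := Nat.floor_le ht
      linarith
    · have := (Nat.lt_floor_add_one t).le
      linarith
  have hbound : ‖exp (t • Ac)‖ ≤ C₀ * (r : ℝ) ^ n * K₁ := by
    rw [hsplit]
    calc ‖B ^ n * exp ((t - n) • Ac)‖ ≤ ‖B ^ n‖ * ‖exp ((t - n) • Ac)‖ := norm_mul_le _ _
      _ ≤ (C₀ * (r : ℝ) ^ n) * K₁ := by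
          have h1 := hpow n
          have h2 := hK₁ _ hs01
          have h3 := norm_nonneg (exp ((t - (n:ℝ)) • Ac))
          have h4 : (0:ℝ) ≤ C₀ * (r : ℝ) ^ n := mul_nonneg (by linarith) (by positivity)
          exact mul_le_mul h1 h2 h3 h4
  have hfinal : C₀ * (r : ℝ) ^ n * K₁ ≤ C₀ * K₁ * Real.exp ε * Real.exp (-ε * t) := by
    rw [hrexp n]
    have h1 : -(ε * n) ≤ -ε * t + ε := by
      have := (Nat.lt_floor_add_one t).le
      have h2 : t - 1 ≤ (n : ℝ) := by rw [hn]; push_cast at this ⊢; linarith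
      nlinarith
    have h2 : Real.exp (-(ε * n)) ≤ Real.exp (-ε * t + ε) := Real.exp_le_exp.mpr h1
    rw [Real.exp_add] at h2
    have hC₀0 : 0 ≤ C₀ := by linarith
    calc C₀ * Real.exp (-(ε * n)) * K₁ = (C₀ * K₁) * Real.exp (-(ε * n)) := by ring
      _ ≤ (C₀ * K₁) * (Real.exp (-ε * t) * Real.exp ε) :=
          mul_le_mul_of_nonneg_left h2 (mul_nonneg hC₀0 hK₁0)
      _ = C₀ * K₁ * Real.exp ε * Real.exp (-ε * t) := by ring
  rw [hnorm t]
  linarith [hbound, hfinal]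

lemma aux_spec_transpose {d : ℕ} (A : Matrix (Fin d) (Fin d) ℂ) :
    spectrum ℂ Aᵀ = spectrum ℂ A := by
  ext z
  rw [spectrum.mem_iff, spectrum.mem_iff]
  have h : algebraMap ℂ (Matrix (Fin d) (Fin d) ℂ) z - Aᵀ =
      (algebraMap ℂ (Matrix (Fin d) (Fin d) ℂ) z - A)ᵀ := by
    rw [Matrix.transpose_sub]
    congr 1
    rw [Matrix.algebraMap_eq_diagonal, Matrix.diagonal_transpose]
  rw [h]
  constructor <;> intro hu hc <;> apply hu
  · rw [Matrix.isUnit_iff_isUnit_det, Matrix.det_transpose,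
      ← Matrix.isUnit_iff_isUnit_det]
    exact hc
  · rw [Matrix.isUnit_iff_isUnit_det, Matrix.det_transpose,
      ← Matrix.isUnit_iff_isUnit_det] at hc
    exact hc

lemma aux_tendsto_zero {d : ℕ} {f : ℝ → Matrix (Fin d) (Fin d) ℝ} {C ε : ℝ} (hε : 0 < ε)
    (h : ∀ t : ℝ, 0 ≤ t → ‖f t‖ ≤ C * Real.exp (-ε * t)) :
    Filter.Tendsto f Filter.atTop (nhds 0) := by
  apply squeeze_zero_norm' (a := fun t => C * Real.exp (-ε * t))
  · filter_upwards [Filter.eventually_ge_atTop (0:ℝ)] with t ht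
    exact h t ht
  · have h1 : Filter.Tendsto (fun t : ℝ => ε * t) Filter.atTop Filter.atTop :=
      Filter.tendsto_id.const_mul_atTop hε
    have h2 : Filter.Tendsto (fun t : ℝ => Real.exp (-(ε * t))) Filter.atTop (nhds 0) :=
      Real.tendsto_exp_neg_atTop_nhds_zero.comp h1
    have h3 := h2.const_mul C
    rw [mul_zero] at h3
    refine h3.congr fun t => ?_
    ring_nf

theorem stmt_8 (d : ℕ) (hd : 1 ≤ d)
    (M Q v w ψ'₀ : Matrix (Fin d) (Fin d) ℝ)
    (hv : v.IsSymm) (hw : w.IsSymm) (hψ'₀ : ψ'₀.IsSymm)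
    (hARE : ψ'₀ * M + Mᵀ * ψ'₀ - (2:ℝ) • (ψ'₀ * (Qᵀ * Q) * ψ'₀) + v = 0)
    (M' : Matrix (Fin d) (Fin d) ℝ)
    (hM' : M' = M - (2:ℝ) • ((Qᵀ * Q) * ψ'₀))
    (hspec : ∀ lam ∈ spectrum ℂ (M'.map ((↑) : ℝ → ℂ)), lam.re < 0)
    (hwψ : IsUnit (w - ψ'₀))
    (G : ℝ → Matrix (Fin d) (Fin d) ℝ)
    (hG : ∀ t, G t = (w - ψ'₀)⁻¹ +
      (2:ℝ) • ∫ s in (0:ℝ)..t, exp (s • M') * (Qᵀ * Q) * exp (s • M'ᵀ))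
    (hGinv : ∀ t : ℝ, 0 ≤ t → IsUnit (G t))
    (hGinfty : IsUnit ((w - ψ'₀)⁻¹ +
      (2:ℝ) • ∫ s in Set.Ioi (0:ℝ), exp (s • M') * (Qᵀ * Q) * exp (s • M'ᵀ)))
    (ψ : ℝ → Matrix (Fin d) (Fin d) ℝ)
    (hψ : ∀ t, ψ t = ψ'₀ + exp (t • M'ᵀ) * (G t)⁻¹ * exp (t • M')) :
    Filter.Tendsto ψ Filter.atTop (nhds ψ'₀) := by
  obtain ⟨C₁, ε₁, hε₁, hd₁⟩ := aux_decay hd M' hspec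
  have hspecT : ∀ lam ∈ spectrum ℂ ((M'ᵀ).map ((↑) : ℝ → ℂ)), lam.re < 0 := by
    intro lam hlam
    rw [Matrix.transpose_map, aux_spec_transpose] at hlam
    exact hspec lam hlam
  obtain ⟨C₂, ε₂, hε₂, hd₂⟩ := aux_decay hd M'ᵀ hspecT
  have hT1 : Filter.Tendsto (fun t => exp (t • M')) Filter.atTop (nhds 0) :=
    aux_tendsto_zero hε₁ hd₁
  have hT2 : Filter.Tendsto (fun t => exp (t • M'ᵀ)) Filter.atTop (nhds 0) :=
    aux_tendsto_zero hε₂ hd₂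
  set F : ℝ → Matrix (Fin d) (Fin d) ℝ :=
    fun s => exp (s • M') * (Qᵀ * Q) * exp (s • M'ᵀ) with hF
  have hFc : Continuous F := by
    apply Continuous.mul
    apply Continuous.mul
    · exact exp_continuous.comp (continuous_id.smul continuous_const)
    · exact continuous_const
    · exact exp_continuous.comp (continuous_id.smul continuous_const)
  have hbound : ∀ s : ℝ, 0 ≤ s →
      ‖F s‖ ≤ (C₁ * ‖Qᵀ * Q‖ * C₂) * Real.exp (-(ε₁ + ε₂) * s) := by
    intro s hs
    have h1 := hd₁ s hs
    have h2 := hd₂ s hs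
    have hn1 := norm_nonneg (exp (s • M'))
    have hn2 := norm_nonneg (exp (s • M'ᵀ))
    have hnQ := norm_nonneg (Qᵀ * Q)
    have hcalc : ‖F s‖ ≤ ‖exp (s • M')‖ * ‖Qᵀ * Q‖ * ‖exp (s • M'ᵀ)‖ := by
      calc ‖F s‖ ≤ ‖exp (s • M') * (Qᵀ * Q)‖ * ‖exp (s • M'ᵀ)‖ := norm_mul_le _ _
        _ ≤ ‖exp (s • M')‖ * ‖Qᵀ * Q‖ * ‖exp (s • M'ᵀ)‖ := by
            have := norm_mul_le (exp (s • M')) (Qᵀ * Q)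
            nlinarith
    have hexp : Real.exp (-ε₁ * s) * Real.exp (-ε₂ * s) = Real.exp (-(ε₁ + ε₂) * s) := by
      rw [← Real.exp_add]; ring_nf
    have he1 := Real.exp_pos (-ε₁ * s)
    have he2 := Real.exp_pos (-ε₂ * s)
    calc ‖F s‖ ≤ ‖exp (s • M')‖ * ‖Qᵀ * Q‖ * ‖exp (s • M'ᵀ)‖ := hcalc
      _ ≤ (C₁ * Real.exp (-ε₁ * s)) * ‖Qᵀ * Q‖ * (C₂ * Real.exp (-ε₂ * s)) := by
          apply mul_le_mul _ h2 hn2 (by nlinarith)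
          exact mul_le_mul_of_nonneg_right h1 hnQ
      _ = (C₁ * ‖Qᵀ * Q‖ * C₂) * (Real.exp (-ε₁ * s) * Real.exp (-ε₂ * s)) := by ring
      _ = (C₁ * ‖Qᵀ * Q‖ * C₂) * Real.exp (-(ε₁ + ε₂) * s) := by rw [hexp]
  letI : ContinuousENorm (Matrix (Fin d) (Fin d) ℝ) := SeminormedAddGroup.toContinuousENorm
  have hint : MeasureTheory.IntegrableOn F (Set.Ioi (0:ℝ)) := by
    apply MeasureTheory.Integrable.mono'
      (g := fun s => (C₁ * ‖Qᵀ * Q‖ * C₂) * Real.exp (-(ε₁ + ε₂) * s))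
    · exact (exp_neg_integrableOn_Ioi 0 (by linarith)).const_mul _
    · haveI : TopologicalSpace.PseudoMetrizableSpace (Matrix (Fin d) (Fin d) ℝ) :=
        (inferInstance : TopologicalSpace.PseudoMetrizableSpace (Fin d → Fin d → ℝ))
      exact hFc.aestronglyMeasurable.restrict
    · rw [MeasureTheory.ae_restrict_iff' measurableSet_Ioi]
      exact MeasureTheory.ae_of_all _ fun s hs => hbound s (le_of_lt hs)
  have hI := MeasureTheory.intervalIntegral_tendsto_integral_Ioi 0 hint Filter.tendsto_id
  set Ginf : Matrix (Fin d) (Fin d) ℝ :=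
    (w - ψ'₀)⁻¹ + (2:ℝ) • ∫ s in Set.Ioi (0:ℝ), F s with hGinf
  have hGt : Filter.Tendsto G Filter.atTop (nhds Ginf) := by
    have h1 : Filter.Tendsto
        (fun t : ℝ => (w - ψ'₀)⁻¹ + (2:ℝ) • ∫ s in (0:ℝ)..t, F s)
        Filter.atTop (nhds Ginf) := tendsto_const_nhds.add (hI.const_smul (2:ℝ))
    exact h1.congr fun t => (hG t).symm
  have hLinv : Filter.Tendsto (fun t => (G t)⁻¹) Filter.atTop (nhds Ginf⁻¹) := by
    have h1 := (NormedRing.inverse_continuousAt hGinfty.unit).tendsto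
    rw [IsUnit.unit_spec] at h1
    have h2 := h1.comp hGt
    simp only [Function.comp_def, Matrix.nonsing_inv_eq_ringInverse] at h2 ⊢
    exact h2
  have hprod : Filter.Tendsto (fun t => exp (t • M'ᵀ) * (G t)⁻¹ * exp (t • M'))
      Filter.atTop (nhds (0 * Ginf⁻¹ * 0)) := (hT2.mul hLinv).mul hT1
  rw [zero_mul, mul_zero] at hprod
  have hfin := (tendsto_const_nhds (x := ψ'₀)
    (f := Filter.atTop (α := ℝ))).add hprod
  rw [add_zero] at hfin
  exact hfin.congr fun t => (hψ t).symm
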